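/- arXiv:1809.07125 — 2 statements merged into one kernel-verified Lean document; each statement's English description precedes it below -/
import Mathlib

section
/- Let Ω be a topological space equipped with its Borel σ-algebra and let M be a probability measure on Ω. Suppose that for every t > 0 there is a Markov (probability) kernel p_t from Ω to Ω such that: (i) for every point ω ∈ Ω and every open set U containing ω, one has 1 − p_t(ω)(U) = o(t) as t → 0⁺ (in particular p_t(ω)(U) > 0 for all sufficiently small t > 0); and (ii) for every ω ∈ Ω and every t > 0 the measure p_t(ω)(·) is absolutely continuous with respect to M. Then M(U) > 0 for every nonempty open subset U ⊆ Ω; that is, the topological support of M is the whole space Ω. -/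
open MeasureTheory Filter Asymptotics

/-- **Full topological support from a Markov transition function.**
If `M` is a Borel probability measure on a topological space `Ω`, and for each `t > 0`
there is a Markov kernel `p t` from `Ω` to `Ω` such that
(i) for every `ω` and every open `U ∋ ω` one has `1 - p t ω U = o(t)` as `t → 0⁺`, and
(ii) `p t ω ≪ M` for all `ω` and `t > 0`,
then `M U > 0` for every nonempty open `U`, i.e. `M` has full topological support. -/
theorem zMeasure_full_support_abstract
    {Ω : Type*} [TopologicalSpace Ω] [MeasurableSpace Ω] [BorelSpace Ω]
    (M : Measure Ω) [IsProbabilityMeasure M]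
    (p : ℝ → ProbabilityTheory.Kernel Ω Ω)
    (hMarkov : ∀ t : ℝ, 0 < t → ProbabilityTheory.IsMarkovKernel (p t))
    (hLittleO : ∀ (ω : Ω) (U : Set Ω), IsOpen U → ω ∈ U →
      (fun t : ℝ => 1 - (p t ω U).toReal) =o[nhdsWithin 0 (Set.Ioi 0)] (fun t : ℝ => t))
    (hAC : ∀ (ω : Ω) (t : ℝ), 0 < t → p t ω ≪ M) :
    ∀ U : Set Ω, IsOpen U → U.Nonempty → 0 < M U := by
  intro U hU ⟨ω, hω⟩
  by_contra h
  push_neg at h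
  have hMU : M U = 0 := le_antisymm h zero_le
  have hzero : ∀ t : ℝ, 0 < t → p t ω U = 0 := fun t ht => hAC ω t ht hMU
  have heq : (fun t : ℝ => 1 - ((p t) ω U).toReal) =ᶠ[nhdsWithin 0 (Set.Ioi 0)]
      (fun _ => (1 : ℝ)) := by
    filter_upwards [self_mem_nhdsWithin] with t ht
    simp [hzero t ht]
  have htend : Tendsto (fun t : ℝ => 1 - ((p t) ω U).toReal)
      (nhdsWithin 0 (Set.Ioi 0)) (nhds 0) :=
    (hLittleO ω U hU hω).trans_tendsto (tendsto_id.mono_left nhdsWithin_le_nhds)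
  have : Tendsto (fun _ : ℝ => (1 : ℝ)) (nhdsWithin 0 (Set.Ioi 0)) (nhds 0) :=
    htend.congr' heq
  have := tendsto_nhds_unique this tendsto_const_nhds
  norm_num at this
end

section
/- Let z and z' be real numbers such that m < z < m+1 and m < z' < m+1 for some integer m. Then for every Young diagram λ with n boxes: (a) the product ∏_{(i,j)∈λ} (z + j − i)(z' + j − i) over the boxes (i,j) of λ is strictly positive; (b) zz' > 0, so the product ∏_{k=0}^{n−1} (zz' + k) is strictly positive; and hence (c) the quotient ∏_{(i,j)∈λ} (z + j − i)(z' + j − i) / ∏_{k=0}^{n−1} (zz' + k) is strictly positive. -/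
lemma same_unit_interval_mul_pos (a b : ℝ) (k : ℤ)
    (ha : (k : ℝ) < a ∧ a < k + 1) (hb : (k : ℝ) < b ∧ b < k + 1) : 0 < a * b := by
  rcases le_or_gt 0 k with hk | hk
  · have : (0 : ℝ) ≤ k := by exact_mod_cast hk
    have ha' : 0 < a := lt_of_le_of_lt this ha.1
    have hb' : 0 < b := lt_of_le_of_lt this hb.1
    exact mul_pos ha' hb'
  · have hk' : k + 1 ≤ 0 := by omega
    have : ((k : ℝ) + 1) ≤ 0 := by exact_mod_cast hk'
    exact mul_pos_of_neg_of_neg (lt_of_lt_of_le ha.2 this) (lt_of_lt_of_le hb.2 this)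

/-- Positivity of the z-measure weight numerator and denominator at `θ = 1`, in the
real ("principal") case `m < z, z' < m + 1` for an integer `m`: for every Young
diagram `lam` (with `0`-based cells `(i, j)`, so the content of a cell is `j - i`) with
`n` boxes,
(a) `∏_{(i,j)∈λ} (z + j − i)(z' + j − i) > 0`;
(b) `z z' > 0` and `∏_{k=0}^{n−1} (z z' + k) > 0`;
(c) the quotient of the two products is strictly positive. -/
theorem zMeasure_weight_pos_real_case
    (z z' : ℝ) (m : ℤ) (hz : (m : ℝ) < z ∧ z < m + 1) (hz' : (m : ℝ) < z' ∧ z' < m + 1)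
    (lam : YoungDiagram) (n : ℕ) (hn : n = lam.card) :
    (0 < ∏ c ∈ lam.cells, ((z + (c.2 : ℝ) - (c.1 : ℝ)) * (z' + (c.2 : ℝ) - (c.1 : ℝ)))) ∧
    (0 < z * z' ∧ 0 < ∏ k ∈ Finset.range n, (z * z' + (k : ℝ))) ∧
    0 < (∏ c ∈ lam.cells, ((z + (c.2 : ℝ) - (c.1 : ℝ)) * (z' + (c.2 : ℝ) - (c.1 : ℝ)))) /
        (∏ k ∈ Finset.range n, (z * z' + (k : ℝ))) := by
  have hnum : 0 < ∏ c ∈ lam.cells,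
      ((z + (c.2 : ℝ) - (c.1 : ℝ)) * (z' + (c.2 : ℝ) - (c.1 : ℝ))) := by
    apply Finset.prod_pos
    intro c _
    apply same_unit_interval_mul_pos _ _ (m + (c.2 : ℤ) - (c.1 : ℤ)) <;>
      constructor <;> push_cast <;> linarith [hz.1, hz.2, hz'.1, hz'.2]
  have hzz : 0 < z * z' := same_unit_interval_mul_pos z z' m hz hz'
  have hden : 0 < ∏ k ∈ Finset.range n, (z * z' + (k : ℝ)) := by
    apply Finset.prod_pos
    intro k _
    positivity
  exact ⟨hnum, ⟨hzz, hden⟩, div_pos hnum hden⟩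
end
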